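/- Let γ ∈ {1, 2, 3, …}, p > 0, η > 1 and β < pγ with β ≠ pk for all k ∈ {0, 1, …, γ-1}. Let W be a random variable with density f♯_{β,γ,p,η}. Then for every ξ > β - γp with ξ ≠ 0 and ξ ≠ β - pk for all k ∈ {0, 1, …, γ-1}, E[W^ξ] = (Γ(γ + (ξ-β)/p) / (Γ(γ - β/p) C*_{β,γ,p,η})) · Σ_{k=0}^{γ-1} binom(γ-1, k) ((-1)^k/(pk - β)) [ (1 - η^{-ξ})/ξ + (1 - η^{β-pk-ξ})/(β - pk - ξ) ]. -/

import Mathlib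

open MeasureTheory Set

/-- `C*_{β,γ,p,η} = ∫_1^η θ⁻¹ ∫_{1/θ}^1 (1-u^p)^(γ-1) u^(-1-β) du dθ`. -/
noncomputable def Cstar (β γ p η : ℝ) : ℝ :=
  ∫ θ in (1:ℝ)..η, θ⁻¹ * ∫ u in (1/θ)..(1:ℝ), (1 - u ^ p) ^ (γ - 1) * u ^ (-1 - β)

/-- `C_{β,γ,p,η} = p⁻¹ Γ(γ-β/p) C*_{β,γ,p,η}`. -/
noncomputable def Cc (β γ p η : ℝ) : ℝ :=
  p⁻¹ * Real.Gamma (γ - β/p) * Cstar β γ p η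

/-- The incomplete beta gamma mixture (IBGM) density `f♯_{β,γ,p,η}(v)` for `v > 0`. -/
noncomputable def fibgm (β γ p η v : ℝ) : ℝ :=
  (Cc β γ p η)⁻¹ * v ^ (p * γ - β - 1) *
    ∫ θ in (1:ℝ)..η, θ ^ (p * γ - β - 1) * Real.exp (-(v ^ p * θ ^ p)) *
      ∫ u in (1/θ)..(1:ℝ), (1 - u ^ p) ^ (γ - 1) * u ^ (-1 - β)

section IBGMaux
open Real

lemma aux_integrableOn {p q b : ℝ} (hp : 0 < p) (hq : -1 < q) (hb : 0 < b) :
    IntegrableOn (fun x : ℝ => x ^ q * Real.exp (-(b * x ^ p))) (Ioi 0) := by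
  set s : ℝ := (q + 1) / p with hs_def
  have hs : 0 < s := div_pos (by linarith) hp
  have h1 : IntegrableOn (fun y : ℝ => Real.exp (-y) * y ^ (s - 1)) (Ioi 0) :=
    Real.GammaIntegral_convergent hs
  have h2 : IntegrableOn (fun y : ℝ => Real.exp (-(b * y)) * (b * y) ^ (s - 1)) (Ioi 0) := by
    have := (integrableOn_Ioi_comp_mul_left_iff
      (fun y : ℝ => Real.exp (-y) * y ^ (s - 1)) 0 hb).mpr (by rwa [mul_zero])
    simpa using this
  have h3 : IntegrableOn (fun y : ℝ => y ^ (s - 1) * Real.exp (-(b * y))) (Ioi 0) := by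
    have h2' : IntegrableOn (fun y : ℝ => b ^ (s - 1) * (y ^ (s - 1) * Real.exp (-(b * y))))
        (Ioi 0) := by
      refine h2.congr_fun (fun y hy => ?_) measurableSet_Ioi
      beta_reduce
      rw [mul_rpow hb.le (le_of_lt hy)]
      ring
    have := h2'.const_mul (b ^ (s - 1))⁻¹
    exact (by simpa [← mul_assoc, inv_mul_cancel₀ (ne_of_gt (rpow_pos_of_pos hb (s-1)))] using this :
      Integrable (fun y : ℝ => y ^ (s - 1) * Real.exp (-(b * y))) (volume.restrict (Ioi 0)))
  have h4 := (integrableOn_Ioi_comp_rpow_iff'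
    (fun y : ℝ => y ^ (s - 1) * Real.exp (-(b * y))) (ne_of_gt hp)).mpr h3
  refine h4.congr_fun (fun x hx => ?_) measurableSet_Ioi
  have hx0 : (0:ℝ) < x := hx
  beta_reduce
  rw [smul_eq_mul, ← Real.rpow_mul hx0.le, ← mul_assoc, ← Real.rpow_add hx0]
  have : p - 1 + p * (s - 1) = q := by
    rw [hs_def, mul_sub, mul_div_assoc', mul_div_cancel_left₀ _ hp.ne']; ring
  rw [this]

lemma innerInt_eq {p β : ℝ} (m : ℕ) (hβk : ∀ k : ℕ, k < m + 1 → β ≠ p * k)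
    {θ : ℝ} (hθ : 1 ≤ θ) :
    ∫ u in (1/θ)..(1:ℝ), (1 - u ^ p) ^ m * u ^ (-1 - β) =
      ∑ k ∈ Finset.range (m+1),
        (m.choose k : ℝ) * (-1)^k / (p * k - β) * (1 - θ ^ (β - p * k)) := by
  have hθ0 : (0:ℝ) < θ := lt_of_lt_of_le one_pos hθ
  have hinv : (0:ℝ) < 1/θ := by positivity
  have hle : 1/θ ≤ 1 := by
    rw [div_le_one hθ0]; exact hθ
  have h0 : (0:ℝ) ∉ uIcc (1/θ) 1 := by
    rw [uIcc_of_le hle]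
    rintro ⟨h1, h2⟩; linarith
  have hne : ∀ k : ℕ, k < m + 1 → p * k - 1 - β ≠ -1 := by
    intro k hk h
    exact hβk k hk (by linarith)
  -- rewrite integrand
  have hEq : EqOn (fun u : ℝ => (1 - u ^ p) ^ m * u ^ (-1 - β))
      (fun u : ℝ => ∑ k ∈ Finset.range (m+1),
        (m.choose k : ℝ) * (-1)^k * u ^ (p * k - 1 - β)) (uIcc (1/θ) 1) := by
    intro u hu
    rw [uIcc_of_le hle] at hu
    have hu0 : (0:ℝ) < u := lt_of_lt_of_le hinv hu.1
    simp only
    rw [show (1 - u ^ p) = (-(u ^ p) + 1) by ring, add_pow, Finset.sum_mul]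
    refine Finset.sum_congr rfl (fun k hk => ?_)
    rw [one_pow, neg_pow, mul_one, ← Real.rpow_natCast (u ^ p) k, ← Real.rpow_mul hu0.le]
    rw [show (-1:ℝ)^k * u ^ (p * k) * ↑(m.choose k) * u ^ (-1 - β)
        = (m.choose k : ℝ) * (-1)^k * (u ^ (p * k) * u ^ (-1-β)) by ring,
      ← Real.rpow_add hu0]
    ring_nf
  rw [intervalIntegral.integral_congr hEq, intervalIntegral.integral_finset_sum
    (fun k _ => ((intervalIntegral.intervalIntegrable_rpow (Or.inr h0)).const_mul _))]
  refine Finset.sum_congr rfl (fun k hk => ?_)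
  rw [intervalIntegral.integral_const_mul,
    integral_rpow (Or.inr ⟨hne k (Finset.mem_range.mp hk), h0⟩)]
  have hpow : (1/θ) ^ (p * (k:ℝ) - 1 - β + 1) = θ ^ (β - p * k) := by
    rw [one_div, Real.inv_rpow hθ0.le, ← Real.rpow_neg hθ0.le]
    ring_nf
  rw [hpow, Real.one_rpow, show p * (k:ℝ) - 1 - β + 1 = p * k - β by ring]
  ring

lemma thetaInt_eq {p β ξ η : ℝ} (m : ℕ) (hβk : ∀ k : ℕ, k < m + 1 → β ≠ p * k)
    (hη : 1 < η) (hξ0 : ξ ≠ 0) (hξk : ∀ k : ℕ, k < m + 1 → ξ ≠ β - p * k) :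
    (∫ θ in (1:ℝ)..η, θ ^ (-1 - ξ) * ∫ u in (1/θ)..(1:ℝ), (1 - u ^ p) ^ m * u ^ (-1 - β))
      = ∑ k ∈ Finset.range (m+1), (m.choose k : ℝ) * ((-1)^k / (p * k - β)) *
          ((1 - η ^ (-ξ))/ξ + (1 - η ^ (β - p * k - ξ))/(β - p * k - ξ)) := by
  have h0 : (0:ℝ) ∉ uIcc 1 η := by
    rw [uIcc_of_le hη.le]; rintro ⟨h1, h2⟩; linarith
  have hEq : EqOn (fun θ : ℝ => θ ^ (-1 - ξ) * ∫ u in (1/θ)..(1:ℝ), (1 - u ^ p) ^ m * u ^ (-1 - β))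
      (fun θ : ℝ => ∑ k ∈ Finset.range (m+1), (m.choose k : ℝ) * (-1)^k / (p * k - β) *
        (θ ^ (-1 - ξ) - θ ^ (β - p * k - ξ - 1))) (uIcc 1 η) := by
    intro θ hθ
    rw [uIcc_of_le hη.le] at hθ
    have hθ1 : (1:ℝ) ≤ θ := hθ.1
    have hθ0 : (0:ℝ) < θ := by linarith
    simp only
    rw [innerInt_eq m hβk hθ1, Finset.mul_sum]
    refine Finset.sum_congr rfl (fun k hk => ?_)
    rw [show θ ^ (β - p * (k:ℝ) - ξ - 1) = θ ^ (-1 - ξ) * θ ^ (β - p * k) from by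
      rw [← Real.rpow_add hθ0]; congr 1; ring]
    ring
  rw [intervalIntegral.integral_congr hEq, intervalIntegral.integral_finset_sum
    (fun k _ => (((intervalIntegral.intervalIntegrable_rpow (Or.inr h0)).sub
      (intervalIntegral.intervalIntegrable_rpow (Or.inr h0))).const_mul _))]
  refine Finset.sum_congr rfl (fun k hk => ?_)
  have hk' := Finset.mem_range.mp hk
  rw [intervalIntegral.integral_const_mul,
    intervalIntegral.integral_sub (intervalIntegral.intervalIntegrable_rpow (Or.inr h0))
      (intervalIntegral.intervalIntegrable_rpow (Or.inr h0)),
    integral_rpow (Or.inr ⟨by intro h; exact hξ0 (by linarith), h0⟩),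
    integral_rpow (Or.inr ⟨by intro h; exact hξk k hk' (by linarith), h0⟩)]
  rw [show -1 - ξ + 1 = -ξ by ring, show β - p * k - ξ - 1 + 1 = β - p * k - ξ by ring]
  simp only [Real.one_rpow]
  ring

lemma g_contOn {p β : ℝ} (m : ℕ) {s : Set ℝ} (hs : ∀ x ∈ s, (0:ℝ) < x) :
    ContinuousOn (fun u : ℝ => (1 - u ^ p) ^ m * u ^ (-1 - β)) s := by
  refine ContinuousOn.mul ?_ ?_
  · exact (continuousOn_const.sub ((continuousOn_id).rpow_const
      (fun x hx => Or.inl (ne_of_gt (hs x hx))))).pow m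
  · exact (continuousOn_id).rpow_const (fun x hx => Or.inl (ne_of_gt (hs x hx)))

lemma g_integrableOn {p β η : ℝ} (m : ℕ) (hη : 1 < η) :
    IntegrableOn (fun u : ℝ => (1 - u ^ p) ^ m * u ^ (-1 - β)) (Icc (1/η) 1) := by
  refine (g_contOn m (fun x hx => ?_)).integrableOn_compact isCompact_Icc
  have : (0:ℝ) < 1/η := by positivity
  exact lt_of_lt_of_le this hx.1

lemma I_contOn {p β η : ℝ} (m : ℕ) (hη : 1 < η) :
    ContinuousOn (fun θ : ℝ => ∫ u in (1/θ)..(1:ℝ), (1 - u ^ p) ^ m * u ^ (-1 - β))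
      (Icc 1 η) := by
  have hη0 : (0:ℝ) < η := lt_trans one_pos hη
  have hle : 1/η ≤ 1 := by rw [div_le_one hη0]; exact hη.le
  have hgint := g_integrableOn (p := p) (β := β) m hη
  have hgint' : IntegrableOn (fun u : ℝ => (1 - u ^ p) ^ m * u ^ (-1 - β))
      (uIcc (1/η) 1) := by rwa [uIcc_of_le hle]
  have hF : ContinuousOn (fun x : ℝ => ∫ u in (1/η)..x, (1 - u ^ p) ^ m * u ^ (-1 - β))
      (Icc (1/η) 1) := by
    have := intervalIntegral.continuousOn_primitive_interval (a := 1/η) (b := 1)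
      (μ := volume) hgint'
    rwa [uIcc_of_le hle] at this
  have hmaps : MapsTo (fun θ : ℝ => 1/θ) (Icc 1 η) (Icc (1/η) 1) := by
    intro θ hθ
    have hθ0 : (0:ℝ) < θ := lt_of_lt_of_le one_pos hθ.1
    constructor
    · exact one_div_le_one_div_of_le hθ0 hθ.2
    · rw [div_le_one hθ0]; exact hθ.1
  have hcont : ContinuousOn (fun θ : ℝ =>
      (∫ u in (1/η)..(1:ℝ), (1 - u ^ p) ^ m * u ^ (-1 - β)) -
        ∫ u in (1/η)..(1/θ), (1 - u ^ p) ^ m * u ^ (-1 - β)) (Icc 1 η) := by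
    refine continuousOn_const.sub (hF.comp ?_ hmaps)
    exact continuousOn_const.div continuousOn_id (fun θ hθ => ne_of_gt (lt_of_lt_of_le one_pos hθ.1))
  refine ContinuousOn.congr hcont (fun θ hθ => ?_)
  have hθ0 : (0:ℝ) < θ := lt_of_lt_of_le one_pos hθ.1
  have h1 : IntervalIntegrable (fun u : ℝ => (1 - u ^ p) ^ m * u ^ (-1 - β)) volume (1/η) 1 :=
    hgint'.intervalIntegrable
  have h2 : IntervalIntegrable (fun u : ℝ => (1 - u ^ p) ^ m * u ^ (-1 - β)) volume (1/η) (1/θ) := by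
    have hsub : uIcc (1/η) (1/θ) ⊆ Icc (1/η) 1 := by
      rw [uIcc_of_le (one_div_le_one_div_of_le hθ0 hθ.2)]
      exact Icc_subset_Icc le_rfl (by rw [div_le_one hθ0]; exact hθ.1)
    exact (hgint.mono_set hsub).intervalIntegrable
  exact (intervalIntegral.integral_interval_sub_left h1 h2).symm

lemma I_nonneg {p β : ℝ} (m : ℕ) (hp : 0 ≤ p) {θ : ℝ} (hθ : 1 ≤ θ) :
    0 ≤ ∫ u in (1/θ)..(1:ℝ), (1 - u ^ p) ^ m * u ^ (-1 - β) := by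
  have hθ0 : (0:ℝ) < θ := lt_of_lt_of_le one_pos hθ
  have hle : 1/θ ≤ 1 := by rw [div_le_one hθ0]; exact hθ
  refine intervalIntegral.integral_nonneg hle (fun u hu => ?_)
  have hu0 : (0:ℝ) < u := lt_of_lt_of_le (by positivity) hu.1
  have h1 : u ^ p ≤ 1 := Real.rpow_le_one hu0.le hu.2 hp
  exact mul_nonneg (pow_nonneg (by linarith) m) (Real.rpow_nonneg hu0.le _)

lemma I_le {p β η : ℝ} (m : ℕ) (hp : 0 ≤ p) (hη : 1 < η) {θ : ℝ} (hθ : θ ∈ Icc 1 η) :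
    (∫ u in (1/θ)..(1:ℝ), (1 - u ^ p) ^ m * u ^ (-1 - β)) ≤ max 1 ((1/η) ^ (-1 - β)) := by
  have hη0 : (0:ℝ) < η := lt_trans one_pos hη
  have hθ0 : (0:ℝ) < θ := lt_of_lt_of_le one_pos hθ.1
  have hle : 1/θ ≤ 1 := by rw [div_le_one hθ0]; exact hθ.1
  have hinvle : 1/η ≤ 1/θ := one_div_le_one_div_of_le hθ0 hθ.2
  have hM : (0:ℝ) ≤ max 1 ((1/η) ^ (-1 - β)) := le_trans zero_le_one (le_max_left _ _)
  have hgint : IntervalIntegrable (fun u : ℝ => (1 - u ^ p) ^ m * u ^ (-1 - β)) volume (1/θ) 1 := by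
    have hsub : uIcc (1/θ) 1 ⊆ Icc (1/η) 1 := by
      rw [uIcc_of_le hle]; exact Icc_subset_Icc hinvle le_rfl
    exact ((g_integrableOn m hη).mono_set hsub).intervalIntegrable
  have hbd : ∀ u ∈ Icc (1/θ) 1, (1 - u ^ p) ^ m * u ^ (-1 - β) ≤ max 1 ((1/η) ^ (-1 - β)) := by
    intro u hu
    have hu0 : (0:ℝ) < u := lt_of_lt_of_le (by positivity) hu.1
    have h1 : u ^ p ≤ 1 := Real.rpow_le_one hu0.le hu.2 hp
    have h2 : (1 - u ^ p) ^ m ≤ 1 :=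
      pow_le_one₀ (by linarith) (by linarith [Real.rpow_nonneg hu0.le p])
    have h3 : u ^ (-1 - β) ≤ max 1 ((1/η) ^ (-1 - β)) := by
      rcases le_or_gt 0 (-1 - β) with h | h
      · exact le_max_of_le_left (Real.rpow_le_one hu0.le hu.2 h)
      · refine le_max_of_le_right ?_
        exact Real.rpow_le_rpow_of_nonpos (by positivity) (le_trans hinvle hu.1) h.le
    calc (1 - u ^ p) ^ m * u ^ (-1 - β) ≤ 1 * u ^ (-1 - β) :=
          mul_le_mul_of_nonneg_right h2 (Real.rpow_nonneg hu0.le _)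
      _ = u ^ (-1 - β) := one_mul _
      _ ≤ _ := h3
  calc (∫ u in (1/θ)..(1:ℝ), (1 - u ^ p) ^ m * u ^ (-1 - β))
      ≤ ∫ _ in (1/θ)..(1:ℝ), max 1 ((1/η) ^ (-1 - β)) := by
        refine intervalIntegral.integral_mono_on hle hgint (intervalIntegrable_const) hbd
    _ = (1 - 1/θ) * max 1 ((1/η) ^ (-1 - β)) := by
        rw [intervalIntegral.integral_const, smul_eq_mul]
    _ ≤ 1 * max 1 ((1/η) ^ (-1 - β)) := by
        refine mul_le_mul_of_nonneg_right (by linarith [(by positivity : (0:ℝ) < 1/θ)]) hM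
    _ = _ := one_mul _

lemma core_eval {p β ξ η : ℝ} (m : ℕ) (hp : 0 < p) (hη : 1 < η)
    (hξ : β - (↑(m+1):ℝ) * p < ξ) :
    (∫ v in Ioi (0:ℝ), v ^ (p * (↑(m+1):ℝ) - β - 1 + ξ) *
      ∫ θ in (1:ℝ)..η, θ ^ (p * (↑(m+1):ℝ) - β - 1) * Real.exp (-(v ^ p * θ ^ p)) *
        ∫ u in (1/θ)..(1:ℝ), (1 - u ^ p) ^ m * u ^ (-1 - β))
    = p⁻¹ * Real.Gamma ((↑(m+1):ℝ) + (ξ - β) / p) *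
        ∫ θ in (1:ℝ)..η, θ ^ (-1 - ξ) *
          ∫ u in (1/θ)..(1:ℝ), (1 - u ^ p) ^ m * u ^ (-1 - β) := by
  have hη0 : (0:ℝ) < η := lt_trans one_pos hη
  set I : ℝ → ℝ := fun θ => ∫ u in (1/θ)..(1:ℝ), (1 - u ^ p) ^ m * u ^ (-1 - β) with hI_def
  simp only [show ∀ θ : ℝ, (∫ u in (1/θ)..(1:ℝ), (1 - u ^ p) ^ m * u ^ (-1 - β)) = I θ
    from fun θ => rfl]
  set a : ℝ := p * (↑(m+1):ℝ) - β - 1 with ha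
  set A : ℝ := a + ξ with hA
  have hA1 : (-1:ℝ) < A := by
    rw [hA, ha]; push_cast; push_cast at hξ; linarith
  set M : ℝ := η ^ |a| * max 1 ((1/η) ^ (-1 - β)) with hM
  set ν : Measure ℝ := volume.restrict (Ioc (1:ℝ) η) with hν
  set K : ℝ × ℝ → ℝ := fun z => z.1 ^ A * (z.2 ^ a * Real.exp (-(z.1 ^ p * z.2 ^ p)) * I z.2)
    with hK
  have hI_aesm : AEStronglyMeasurable I ν :=
    ((I_contOn m hη).aestronglyMeasurable measurableSet_Icc).mono_measure
      (Measure.restrict_mono Ioc_subset_Icc_self le_rfl)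
  have hK_aesm : AEStronglyMeasurable K ((volume.restrict (Ioi (0:ℝ))).prod ν) := by
    have h1 : Measurable fun z : ℝ × ℝ =>
        z.1 ^ A * (z.2 ^ a * Real.exp (-(z.1 ^ p * z.2 ^ p))) := by fun_prop
    have h2 : AEStronglyMeasurable (fun z : ℝ × ℝ => I z.2)
        ((volume.restrict (Ioi (0:ℝ))).prod ν) :=
      hI_aesm.comp_quasiMeasurePreserving Measure.quasiMeasurePreserving_snd
    refine (h1.aestronglyMeasurable.mul h2).congr (Filter.Eventually.of_forall fun z => ?_)
    simp only [hK, Pi.mul_apply]; ring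
  have hdom : Integrable (fun z : ℝ × ℝ => (z.1 ^ A * Real.exp (-(1 * z.1 ^ p))) * M)
      ((volume.restrict (Ioi (0:ℝ))).prod ν) := by
    exact Integrable.mul_prod (f := fun v : ℝ => v ^ A * Real.exp (-(1 * v ^ p)))
      (g := fun _ : ℝ => M) (aux_integrableOn hp hA1 one_pos)
      (integrableOn_const measure_Ioc_lt_top.ne)
  have hKint : Integrable K ((volume.restrict (Ioi (0:ℝ))).prod ν) := by
    refine hdom.mono' hK_aesm ?_
    rw [hν, Measure.prod_restrict]
    filter_upwards [self_mem_ae_restrict (measurableSet_Ioi.prod measurableSet_Ioc)] with z hz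
    obtain ⟨hz1, hz2⟩ := hz
    have hv0 : (0:ℝ) < z.1 := hz1
    have hθ1 : (1:ℝ) < z.2 := hz2.1
    have hθη : z.2 ≤ η := hz2.2
    have hθ0 : (0:ℝ) < z.2 := lt_trans one_pos hθ1
    have hInn : 0 ≤ I z.2 := I_nonneg m hp.le hθ1.le
    have hIle : I z.2 ≤ max 1 ((1/η) ^ (-1 - β)) := I_le m hp.le hη ⟨hθ1.le, hθη⟩
    have e1 : z.2 ^ a ≤ η ^ |a| := by
      rcases le_or_gt 0 a with h | h
      · exact le_trans (Real.rpow_le_rpow hθ0.le hθη h)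
          (Real.rpow_le_rpow_of_exponent_le hη.le (le_abs_self a))
      · exact le_trans (Real.rpow_le_one_of_one_le_of_nonpos hθ1.le h.le)
          (Real.one_le_rpow hη.le (abs_nonneg a))
    have e2 : Real.exp (-(z.1 ^ p * z.2 ^ p)) ≤ Real.exp (-(1 * z.1 ^ p)) := by
      rw [Real.exp_le_exp, neg_le_neg_iff, one_mul]
      nlinarith [Real.one_le_rpow hθ1.le hp.le, Real.rpow_nonneg hv0.le p]
    have hKnn : 0 ≤ K z := by
      refine mul_nonneg (Real.rpow_nonneg hv0.le _)
        (mul_nonneg (mul_nonneg (Real.rpow_nonneg hθ0.le _) (Real.exp_nonneg _)) hInn)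
    rw [Real.norm_eq_abs, abs_of_nonneg hKnn]
    have step : K z ≤ z.1 ^ A * (η ^ |a| * Real.exp (-(1 * z.1 ^ p)) *
        max 1 ((1/η) ^ (-1 - β))) := by
      refine mul_le_mul_of_nonneg_left ?_ (Real.rpow_nonneg hv0.le _)
      refine mul_le_mul (mul_le_mul e1 e2 (Real.exp_nonneg _)
        (Real.rpow_nonneg hη0.le _)) hIle hInn ?_
      exact mul_nonneg (Real.rpow_nonneg hη0.le _) (Real.exp_nonneg _)
    calc K z ≤ _ := step
      _ = z.1 ^ A * Real.exp (-(1 * z.1 ^ p)) * M := by rw [hM]; ring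
  -- step 1: interval to set integral, pull v-power inside
  have L1 : (∫ v in Ioi (0:ℝ), v ^ A * ∫ θ in (1:ℝ)..η,
        θ ^ a * Real.exp (-(v ^ p * θ ^ p)) * I θ)
      = ∫ v in Ioi (0:ℝ), ∫ θ, K (v, θ) ∂ν := by
    refine setIntegral_congr_fun measurableSet_Ioi (fun v hv => ?_)
    rw [intervalIntegral.integral_of_le hη.le, ← integral_const_mul]
  have L2 : (∫ v in Ioi (0:ℝ), ∫ θ, K (v, θ) ∂ν)
      = ∫ θ, (∫ v in Ioi (0:ℝ), K (v, θ)) ∂ν :=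
    integral_integral_swap hKint
  have L3 : (∫ θ, (∫ v in Ioi (0:ℝ), K (v, θ)) ∂ν)
      = ∫ θ, (p⁻¹ * Real.Gamma ((↑(m+1):ℝ) + (ξ - β) / p)) * (θ ^ (-1 - ξ) * I θ) ∂ν := by
    rw [hν]
    refine setIntegral_congr_fun measurableSet_Ioc (fun θ hθ => ?_)
    have hθ0 : (0:ℝ) < θ := lt_trans one_pos hθ.1
    have hbp : (0:ℝ) < θ ^ p := Real.rpow_pos_of_pos hθ0 p
    have hpt : ∀ v : ℝ, K (v, θ) = (θ ^ a * I θ) * (v ^ A * Real.exp (-θ ^ p * v ^ p)) := by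
      intro v
      simp only [hK]
      rw [show -θ ^ p * v ^ p = -(v ^ p * θ ^ p) by ring]
      ring
    simp only [hpt]
    rw [integral_const_mul, integral_rpow_mul_exp_neg_mul_rpow hp hA1 hbp]
    have h1 : (θ ^ p) ^ (-(A + 1) / p) = θ ^ (-(A + 1)) := by
      rw [← Real.rpow_mul hθ0.le]; congr 1; field_simp
    have h2 : θ ^ a * θ ^ (-(A + 1)) = θ ^ (-1 - ξ) := by
      rw [← Real.rpow_add hθ0]; congr 1; rw [hA]; ring
    have h3 : (A + 1) / p = (↑(m+1):ℝ) + (ξ - β) / p := by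
      rw [hA, ha]; field_simp; ring
    rw [h1, h3, ← h2]
    ring
  rw [L1, L2, L3, integral_const_mul, hν, ← intervalIntegral.integral_of_le hη.le]

lemma alg_final {p G1 G2 C S : ℝ} (hp : p ≠ 0) :
    (p⁻¹ * G1 * C)⁻¹ * (p⁻¹ * G2 * S) = G2 / (G1 * C) * S := by
  rw [mul_inv, mul_inv, inv_inv, div_eq_mul_inv, mul_inv]
  rw [show p * G1⁻¹ * C⁻¹ * (p⁻¹ * G2 * S) = (p * p⁻¹) * (G1⁻¹ * C⁻¹ * G2 * S) by ring,
    mul_inv_cancel₀ hp, one_mul]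
  ring

end IBGMaux

theorem ibgm_moments {Ω : Type*} [MeasurableSpace Ω] (μ : Measure Ω) [IsProbabilityMeasure μ]
    (γ : ℕ) (hγ : 1 ≤ γ) (p η β ξ : ℝ) (hp : 0 < p) (hη : 1 < η) (hβ : β < p * γ)
    (hβk : ∀ k : ℕ, k < γ → β ≠ p * k)
    (W : Ω → ℝ) (hW : Measurable W)
    (hdist : Measure.map W μ =
      MeasureTheory.volume.withDensity
        (fun v => ENNReal.ofReal (if 0 < v then fibgm β γ p η v else 0)))
    (hξ : β - γ * p < ξ) (hξ0 : ξ ≠ 0) (hξk : ∀ k : ℕ, k < γ → ξ ≠ β - p * k) :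
    (∫ ω, W ω ^ ξ ∂μ) =
      Real.Gamma (γ + (ξ - β) / p) / (Real.Gamma (γ - β / p) * Cstar β γ p η) *
        ∑ k ∈ Finset.range γ,
          ((γ - 1).choose k : ℝ) * ((-1) ^ k / (p * k - β)) *
            ((1 - η ^ (-ξ)) / ξ + (1 - η ^ (β - p * k - ξ)) / (β - p * k - ξ)) := by
  obtain ⟨m, rfl⟩ : ∃ m, γ = m + 1 := ⟨γ - 1, by omega⟩
  have hη0 : (0:ℝ) < η := lt_trans one_pos hη
  have hcast : ∀ x : ℝ, x ^ ((↑(m+1):ℝ) - 1) = x ^ m := fun x => by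
    rw [show ((↑(m+1):ℝ) - 1) = (m:ℝ) by push_cast; ring, Real.rpow_natCast]
  have hγβ : (0:ℝ) < (↑(m+1):ℝ) - β / p := by
    rw [sub_pos, div_lt_iff₀ hp]; linarith [hβ]
  have hΓpos : 0 < Real.Gamma ((↑(m+1):ℝ) - β / p) := Real.Gamma_pos_of_pos hγβ
  have hfib : ∀ v : ℝ, fibgm β (↑(m+1)) p η v
      = (Cc β (↑(m+1)) p η)⁻¹ * v ^ (p * (↑(m+1):ℝ) - β - 1) *
        ∫ θ in (1:ℝ)..η, θ ^ (p * (↑(m+1):ℝ) - β - 1) * Real.exp (-(v ^ p * θ ^ p)) *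
          ∫ u in (1/θ)..(1:ℝ), (1 - u ^ p) ^ m * u ^ (-1 - β) := fun v => by
    unfold fibgm; simp only [hcast]
  have hCs : Cstar β (↑(m+1)) p η
      = ∫ θ in (1:ℝ)..η, θ⁻¹ * ∫ u in (1/θ)..(1:ℝ), (1 - u ^ p) ^ m * u ^ (-1 - β) := by
    unfold Cstar; simp only [hcast]
  have hCstar_nonneg : 0 ≤ Cstar β (↑(m+1)) p η := by
    rw [hCs]
    refine intervalIntegral.integral_nonneg hη.le (fun θ hθ => ?_)
    exact mul_nonneg (inv_nonneg.mpr (by linarith [hθ.1])) (I_nonneg m hp.le hθ.1)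
  have hCc_nonneg : 0 ≤ Cc β (↑(m+1)) p η :=
    mul_nonneg (mul_nonneg (inv_nonneg.mpr hp.le) hΓpos.le) hCstar_nonneg
  have hJnonneg : ∀ v : ℝ, 0 ≤ ∫ θ in (1:ℝ)..η, θ ^ (p * (↑(m+1):ℝ) - β - 1) *
      Real.exp (-(v ^ p * θ ^ p)) * ∫ u in (1/θ)..(1:ℝ), (1 - u ^ p) ^ m * u ^ (-1 - β) := by
    intro v
    refine intervalIntegral.integral_nonneg hη.le (fun θ hθ => ?_)
    exact mul_nonneg (mul_nonneg (Real.rpow_nonneg (by linarith [hθ.1]) _) (Real.exp_nonneg _))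
      (I_nonneg m hp.le hθ.1)
  have hfib_nonneg : ∀ v : ℝ, 0 < v → 0 ≤ fibgm β (↑(m+1)) p η v := fun v hv => by
    rw [hfib v]
    exact mul_nonneg (mul_nonneg (inv_nonneg.mpr hCc_nonneg) (Real.rpow_nonneg hv.le _))
      (hJnonneg v)
  have hI_aesm : AEStronglyMeasurable
      (fun θ : ℝ => ∫ u in (1/θ)..(1:ℝ), (1 - u ^ p) ^ m * u ^ (-1 - β))
      (volume.restrict (Ioc (1:ℝ) η)) :=
    ((I_contOn m hη).aestronglyMeasurable measurableSet_Icc).mono_measure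
      (Measure.restrict_mono Ioc_subset_Icc_self le_rfl)
  have hfib_aesm : AEStronglyMeasurable (fibgm β (↑(m+1)) p η) volume := by
    have h1 : AEStronglyMeasurable (fun z : ℝ × ℝ =>
        z.2 ^ (p * (↑(m+1):ℝ) - β - 1) * Real.exp (-(z.1 ^ p * z.2 ^ p)) *
          ∫ u in (1/z.2)..(1:ℝ), (1 - u ^ p) ^ m * u ^ (-1 - β))
        (volume.prod (volume.restrict (Ioc (1:ℝ) η))) := by
      refine AEStronglyMeasurable.mul ?_
        (hI_aesm.comp_quasiMeasurePreserving Measure.quasiMeasurePreserving_snd)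
      exact (by fun_prop : Measurable fun z : ℝ × ℝ =>
        z.2 ^ (p * (↑(m+1):ℝ) - β - 1) * Real.exp (-(z.1 ^ p * z.2 ^ p))).aestronglyMeasurable
    have h2 := h1.integral_prod_right'
    have h4 : AEStronglyMeasurable (fun v : ℝ => v ^ (p * (↑(m+1):ℝ) - β - 1)) volume :=
      (by fun_prop : Measurable fun v : ℝ => v ^ (p * (↑(m+1):ℝ) - β - 1)).aestronglyMeasurable
    refine AEStronglyMeasurable.congr
      (((h4.const_mul ((Cc β (↑(m+1)) p η)⁻¹)).mul h2)) (Filter.Eventually.of_forall fun v => ?_)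
    simp only [Pi.mul_apply]
    rw [hfib v, intervalIntegral.integral_of_le hη.le]
  have hite_aemeas : AEMeasurable
      (fun v : ℝ => Real.toNNReal (if 0 < v then fibgm β (↑(m+1)) p η v else 0)) volume := by
    refine measurable_real_toNNReal.comp_aemeasurable ?_
    have heq : (fun v : ℝ => if 0 < v then fibgm β (↑(m+1)) p η v else 0)
        = (Ioi (0:ℝ)).indicator (fibgm β (↑(m+1)) p η) := by
      funext v; simp [Set.indicator, mem_Ioi]
    rw [heq]
    exact (hfib_aesm.indicator measurableSet_Ioi).aemeasurable
  calc (∫ ω, W ω ^ ξ ∂μ)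
      = ∫ v, v ^ ξ ∂(Measure.map W μ) :=
        (integral_map hW.aemeasurable
          (by fun_prop : Measurable fun v : ℝ => v ^ ξ).aestronglyMeasurable).symm
    _ = ∫ v, v ^ ξ ∂(volume.withDensity
          (fun v => ENNReal.ofReal (if 0 < v then fibgm β (↑(m+1)) p η v else 0))) := by
        rw [hdist]
    _ = ∫ v, Real.toNNReal (if 0 < v then fibgm β (↑(m+1)) p η v else 0) • v ^ ξ ∂volume :=
        integral_withDensity_eq_integral_smul₀ hite_aemeas _
    _ = ∫ v in Ioi (0:ℝ), fibgm β (↑(m+1)) p η v * v ^ ξ := by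
        rw [← integral_indicator measurableSet_Ioi]
        congr 1; funext v
        by_cases hv : 0 < v
        · simp only [hv, if_true, indicator_of_mem (mem_Ioi.mpr hv), NNReal.smul_def,
            Real.coe_toNNReal _ (hfib_nonneg v hv), smul_eq_mul]
        · simp only [hv, if_false, indicator_of_notMem (fun h => hv (mem_Ioi.mp h)),
            Real.toNNReal_zero, zero_smul]
    _ = ∫ v in Ioi (0:ℝ), (Cc β (↑(m+1)) p η)⁻¹ *
          (v ^ (p * (↑(m+1):ℝ) - β - 1 + ξ) *
            ∫ θ in (1:ℝ)..η, θ ^ (p * (↑(m+1):ℝ) - β - 1) * Real.exp (-(v ^ p * θ ^ p)) *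
              ∫ u in (1/θ)..(1:ℝ), (1 - u ^ p) ^ m * u ^ (-1 - β)) := by
        refine setIntegral_congr_fun measurableSet_Ioi (fun v hv => ?_)
        rw [hfib v, Real.rpow_add (mem_Ioi.mp hv)]
        ring
    _ = (Cc β (↑(m+1)) p η)⁻¹ *
          ∫ v in Ioi (0:ℝ), v ^ (p * (↑(m+1):ℝ) - β - 1 + ξ) *
            ∫ θ in (1:ℝ)..η, θ ^ (p * (↑(m+1):ℝ) - β - 1) * Real.exp (-(v ^ p * θ ^ p)) *
              ∫ u in (1/θ)..(1:ℝ), (1 - u ^ p) ^ m * u ^ (-1 - β) := integral_const_mul _ _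
    _ = (Cc β (↑(m+1)) p η)⁻¹ * (p⁻¹ * Real.Gamma ((↑(m+1):ℝ) + (ξ - β) / p) *
          ∫ θ in (1:ℝ)..η, θ ^ (-1 - ξ) *
            ∫ u in (1/θ)..(1:ℝ), (1 - u ^ p) ^ m * u ^ (-1 - β)) := by
        rw [core_eval m hp hη hξ]
    _ = _ := by
        rw [thetaInt_eq m hβk hη hξ0 hξk]
        simp only [Nat.add_sub_cancel]
        rw [show Cc β (↑(m+1)) p η
          = p⁻¹ * Real.Gamma ((↑(m+1):ℝ) - β/p) * Cstar β (↑(m+1)) p η from rfl]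
        exact alg_final hp.ne'
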